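/- Let (X₁, X₂) be a pair of non-identically distributed log-normal random variables with X_i ~ LN(μ_i, σ_i²), i = 1, 2, and let φ⁻(u) = F_{X₁}^{-1}(u) + F_{X₂}^{-1}(1 − u), u ∈ (0,1), be the aggregate loss function. Set u₀ = Φ((μ₂ − μ₁ + ln(σ₂/σ₁))/(σ₁ + σ₂)) ∈ (0,1). Then φ⁻ is strictly decreasing on (0, u₀), strictly increasing on (u₀, 1), and attains its minimal value at u₀. -/

import Mathlib

open MeasureTheory ProbabilityTheory Set

noncomputable section

variable {Ω : Type*} [MeasurableSpace Ω]

/-- The cumulative distribution function of the random variable `X` under `P`. -/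
def rvCdf (P : Measure Ω) (X : Ω → ℝ) : ℝ → ℝ := fun x => (P {ω | X ω ≤ x}).toReal

/-- The survival function `x ↦ P(X > x)`. -/
def rvSurv (P : Measure Ω) (X : Ω → ℝ) : ℝ → ℝ := fun x => (P {ω | x < X ω}).toReal

/-- The left inverse `F⁻¹(p) = inf {x | F x ≥ p}` of a cdf `F`. -/
def leftInv (F : ℝ → ℝ) (p : ℝ) : ℝ := sInf {x | p ≤ F x}

/-- The right inverse `F⁻¹⁺(p) = sup {x | F x ≤ p}` of a cdf `F`. -/
def rightInv (F : ℝ → ℝ) (p : ℝ) : ℝ := sSup {x | F x ≤ p}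

/-- `g : [0,1] → [0,1]` is a distortion function: nondecreasing with `g 0 = 0`, `g 1 = 1`. -/
def IsDistortion (g : ℝ → ℝ) : Prop :=
  MonotoneOn g (Icc 0 1) ∧ g 0 = 0 ∧ g 1 = 1 ∧ ∀ q ∈ Icc (0:ℝ) 1, g q ∈ Icc (0:ℝ) 1

/-- The dual distortion function `ḡ(q) = 1 - g(1 - q)`. -/
def dualDistortion (g : ℝ → ℝ) : ℝ → ℝ := fun q => 1 - g (1 - q)

/-- The distortion risk measure
`ρ_g[X] = -∫_{-∞}^0 (1 - g(P(X > x))) dx + ∫_0^∞ g(P(X > x)) dx`. -/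
def rho (P : Measure Ω) (g : ℝ → ℝ) (X : Ω → ℝ) : ℝ :=
  (- ∫ x in Iio (0:ℝ), (1 - g (rvSurv P X x))) + ∫ x in Ioi (0:ℝ), g (rvSurv P X x)

/-- The two integrals defining the distortion risk measure `ρ_g[X]` are finite. -/
def RhoFinite (P : Measure Ω) (g : ℝ → ℝ) (X : Ω → ℝ) : Prop :=
  IntegrableOn (fun x => 1 - g (rvSurv P X x)) (Iio (0:ℝ)) volume ∧
  IntegrableOn (fun x => g (rvSurv P X x)) (Ioi (0:ℝ)) volume

/-- `U` is uniformly distributed on `[0,1]`. -/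
def IsUniform01 (P : Measure Ω) (U : Ω → ℝ) : Prop :=
  Measurable U ∧ Measure.map U P = volume.restrict (Icc (0:ℝ) 1)

/-- The counter-monotonic sum `S⁻ = F_{X₁}⁻¹(U) + F_{X₂}⁻¹(1 - U)`. -/
def cmSum (P : Measure Ω) (X₁ X₂ : Ω → ℝ) (U : Ω → ℝ) : Ω → ℝ :=
  fun ω => leftInv (rvCdf P X₁) (U ω) + leftInv (rvCdf P X₂) (1 - U ω)

/-- `X` is symmetric: for some `m`, `P(X ≤ m - x) = P(X ≥ m + x)` for all `x`. -/
def IsSymmetricRV (P : Measure Ω) (X : Ω → ℝ) : Prop :=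
  ∃ m : ℝ, ∀ x : ℝ, P {ω | X ω ≤ m - x} = P {ω | m + x ≤ X ω}

/-- Dispersive order `X ≤_disp Y`. -/
def DispLE (P : Measure Ω) (X Y : Ω → ℝ) : Prop :=
  ∀ u v : ℝ, 0 < v → v ≤ u → u < 1 →
    leftInv (rvCdf P X) u - leftInv (rvCdf P X) v ≤
      leftInv (rvCdf P Y) u - leftInv (rvCdf P Y) v

/-- The cdf of `X` is continuous and strictly increasing on `(F⁻¹⁺(0), F⁻¹(1))`. -/
def CdfRegular (P : Measure Ω) (X : Ω → ℝ) : Prop :=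
  ContinuousOn (rvCdf P X) (Ioo (rightInv (rvCdf P X) 0) (leftInv (rvCdf P X) 1)) ∧
  StrictMonoOn (rvCdf P X) (Ioo (rightInv (rvCdf P X) 0) (leftInv (rvCdf P X) 1))

/-- Value-at-Risk `VaR_p[X] = F_X⁻¹(p)`. -/
def VaR (P : Measure Ω) (X : Ω → ℝ) (p : ℝ) : ℝ := leftInv (rvCdf P X) p

/-- Tail-Value-at-Risk `TVaR_p[X] = (1/(1-p)) ∫_p^1 F_X⁻¹(q) dq`. -/
def TVaR (P : Measure Ω) (X : Ω → ℝ) (p : ℝ) : ℝ :=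
  (1 - p)⁻¹ * ∫ q in p..1, leftInv (rvCdf P X) q

/-- Left-Tail-Value-at-Risk `LTVaR_p[X] = (1/p) ∫_0^p F_X⁻¹(q) dq`. -/
def LTVaR (P : Measure Ω) (X : Ω → ℝ) (p : ℝ) : ℝ :=
  p⁻¹ * ∫ q in (0:ℝ)..p, leftInv (rvCdf P X) q

/-- The standard normal cdf `Φ`. -/
def stdNormCdf : ℝ → ℝ := fun x => ((gaussianReal 0 1) (Iic x)).toReal

/-- The inverse `Φ⁻¹` of the standard normal cdf. -/
def stdNormInv : ℝ → ℝ := fun p => sInf {x | p ≤ stdNormCdf x}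

/-- The Wang transform distortion function at level `p`. -/
def wangG (p : ℝ) : ℝ → ℝ := fun q => stdNormCdf (stdNormInv q + stdNormInv p)

/-- The Wang transform risk measure at level `p`. -/
def WT (P : Measure Ω) (X : Ω → ℝ) (p : ℝ) : ℝ := rho P (wangG p) X

/-- `X ~ N(μ, σ²)`. -/
def IsNormalRV (P : Measure Ω) (X : Ω → ℝ) (μ σ : ℝ) : Prop :=
  Measurable X ∧ Measure.map X P = gaussianReal μ (⟨σ ^ 2, sq_nonneg σ⟩ : NNReal)

/-- `X ~ LN(μ, σ²)`, i.e. `X` is distributed as `exp Z` with `Z ~ N(μ, σ²)`. -/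
def IsLogNormalRV (P : Measure Ω) (X : Ω → ℝ) (μ σ : ℝ) : Prop :=
  Measurable X ∧
    Measure.map X P = Measure.map Real.exp (gaussianReal μ (⟨σ ^ 2, sq_nonneg σ⟩ : NNReal))

/-- `X ~ Student(ν)`: density proportional to `(1 + x²/ν)^(-(ν+1)/2)`. -/
def IsStudentRV (P : Measure Ω) (X : Ω → ℝ) (ν : ℝ) : Prop :=
  Measurable X ∧ ∃ c : ℝ, 0 < c ∧
    Measure.map X P =
      volume.withDensity (fun x => ENNReal.ofReal (c * (1 + x ^ 2 / ν) ^ (-((ν + 1) / 2))))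

/-- Extension of a distortion function to `ℝ` by constants. -/
def gExt (g : ℝ → ℝ) : ℝ → ℝ := fun q => if q ≤ 0 then 0 else if 1 ≤ q then 1 else g q

open Classical in
/-- The Lebesgue–Stieltjes measure `dg` associated with (the right-continuous modification of)
the extension of a distortion function `g` to `ℝ`. -/
def lsMeasure (g : ℝ → ℝ) : Measure ℝ :=
  if h : Monotone (gExt g) then h.stieltjesFunction.measure else 0


section AuxLognormalShape
open Filter
variable {μ₁ μ₂ σ₁ σ₂ : ℝ}

lemma stdNormCdf_eq_integral (x : ℝ) :
    stdNormCdf x = ∫ t in Iic x, gaussianPDFReal 0 1 t := by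
  unfold stdNormCdf
  rw [gaussianReal_apply_eq_integral 0 one_ne_zero (Iic x), ENNReal.toReal_ofReal]
  exact setIntegral_nonneg measurableSet_Iic (fun t _ => gaussianPDFReal_nonneg 0 1 t)

lemma stdNormCdf_sub (a b : ℝ) :
    stdNormCdf b - stdNormCdf a = ∫ t in a..b, gaussianPDFReal 0 1 t := by
  rw [stdNormCdf_eq_integral, stdNormCdf_eq_integral]
  exact intervalIntegral.integral_Iic_sub_Iic
    ((integrable_gaussianPDFReal 0 1).integrableOn)
    ((integrable_gaussianPDFReal 0 1).integrableOn)

lemma stdNormCdf_strictMono : StrictMono stdNormCdf := by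
  intro a b hab
  have h : 0 < ∫ t in a..b, gaussianPDFReal 0 1 t :=
    intervalIntegral.intervalIntegral_pos_of_pos
      ((integrable_gaussianPDFReal 0 1).intervalIntegrable)
      (fun x => gaussianPDFReal_pos 0 1 x one_ne_zero) hab
  have := stdNormCdf_sub a b
  linarith

lemma stdNormCdf_continuous : Continuous stdNormCdf := by
  have : stdNormCdf = fun x => stdNormCdf 0 + ∫ t in (0:ℝ)..x, gaussianPDFReal 0 1 t := by
    funext x
    rw [← stdNormCdf_sub 0 x]; ring
  rw [this]
  exact continuous_const.add ((integrable_gaussianPDFReal 0 1).continuous_primitive 0)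

lemma stdNormCdf_le_one (x : ℝ) : stdNormCdf x ≤ 1 := by
  rw [stdNormCdf_eq_integral, ← integral_gaussianPDFReal_eq_one 0 one_ne_zero]
  exact setIntegral_le_integral (integrable_gaussianPDFReal 0 1)
    (ae_of_all _ (fun t => gaussianPDFReal_nonneg 0 1 t))

lemma stdNormCdf_nonneg (x : ℝ) : 0 ≤ stdNormCdf x := ENNReal.toReal_nonneg

lemma stdNormCdf_mem_Ioo (x : ℝ) : stdNormCdf x ∈ Ioo (0:ℝ) 1 :=
  ⟨lt_of_le_of_lt (stdNormCdf_nonneg (x-1)) (stdNormCdf_strictMono (by linarith)),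
   lt_of_lt_of_le (stdNormCdf_strictMono (lt_add_one x)) (stdNormCdf_le_one (x+1))⟩

lemma stdNormCdf_neg (x : ℝ) : stdNormCdf (-x) = 1 - stdNormCdf x := by
  have hpdf : ∀ t : ℝ, gaussianPDFReal 0 1 (-t) = gaussianPDFReal 0 1 t := by
    intro t; simp [gaussianPDFReal, neg_sq]
  have h1 : stdNormCdf (-x) = ∫ t in Ioi x, gaussianPDFReal 0 1 t := by
    rw [stdNormCdf_eq_integral]
    calc ∫ t in Iic (-x), gaussianPDFReal 0 1 t
        = ∫ t in Iic (-x), gaussianPDFReal 0 1 (-t) := by simp_rw [hpdf]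
      _ = ∫ t in Ioi (-(-x)), gaussianPDFReal 0 1 t := integral_comp_neg_Iic _ _
      _ = ∫ t in Ioi x, gaussianPDFReal 0 1 t := by rw [neg_neg]
  have h2 : stdNormCdf x + ∫ t in Ioi x, gaussianPDFReal 0 1 t = 1 := by
    rw [stdNormCdf_eq_integral, intervalIntegral.integral_Iic_add_Ioi
      ((integrable_gaussianPDFReal 0 1).integrableOn)
      ((integrable_gaussianPDFReal 0 1).integrableOn),
      integral_gaussianPDFReal_eq_one 0 one_ne_zero]
  linarith

lemma stdNormCdf_tendsto_atTop : Tendsto stdNormCdf atTop (nhds 1) := by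
  have h := tendsto_measure_Iic_atTop (gaussianReal 0 1)
  rw [measure_univ] at h
  have := (ENNReal.tendsto_toReal (by simp : (1:ENNReal) ≠ ⊤)).comp h
  unfold stdNormCdf
  simpa [Function.comp_def] using this

lemma stdNormCdf_tendsto_atBot : Tendsto stdNormCdf atBot (nhds 0) := by
  have : stdNormCdf = fun x => 1 - stdNormCdf (-x) := by
    funext x; rw [stdNormCdf_neg x, ← neg_neg x, stdNormCdf_neg (-x)]; ring
  rw [this]
  have h : Tendsto (fun x : ℝ => stdNormCdf (-x)) atBot (nhds 1) :=
    stdNormCdf_tendsto_atTop.comp tendsto_neg_atBot_atTop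
  have := (tendsto_const_nhds (x := (1:ℝ)) (f := atBot (α := ℝ))).sub h
  simpa using this

lemma stdNormCdf_surj {p : ℝ} (hp : p ∈ Ioo (0:ℝ) 1) : ∃ x, stdNormCdf x = p := by
  obtain ⟨b, hb⟩ := (stdNormCdf_tendsto_atTop.eventually (eventually_gt_nhds hp.2)).exists
  obtain ⟨a, ha⟩ := (stdNormCdf_tendsto_atBot.eventually (eventually_lt_nhds hp.1)).exists
  have hab : a ≤ b := by
    by_contra h
    exact absurd (stdNormCdf_strictMono (not_le.mp h)) (by linarith)
  obtain ⟨x, _, hx⟩ := intermediate_value_Icc hab stdNormCdf_continuous.continuousOn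
    ⟨ha.le, hb.le⟩
  exact ⟨x, hx⟩

lemma stdNormInv_eq {p x : ℝ} (hx : stdNormCdf x = p) : stdNormInv p = x := by
  unfold stdNormInv
  have : {y | p ≤ stdNormCdf y} = Ici x := by
    ext y
    simp only [mem_setOf_eq, mem_Ici, ← hx]
    exact ⟨fun h => stdNormCdf_strictMono.le_iff_le.mp h,
           fun h => stdNormCdf_strictMono.monotone h⟩
  rw [this, csInf_Ici]

lemma stdNormCdf_stdNormInv {p : ℝ} (hp : p ∈ Ioo (0:ℝ) 1) :
    stdNormCdf (stdNormInv p) = p := by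
  obtain ⟨x, hx⟩ := stdNormCdf_surj hp
  rw [stdNormInv_eq hx, hx]

lemma stdNormInv_stdNormCdf (x : ℝ) : stdNormInv (stdNormCdf x) = x := stdNormInv_eq rfl

lemma stdNormInv_one_sub {p : ℝ} (hp : p ∈ Ioo (0:ℝ) 1) :
    stdNormInv (1 - p) = - stdNormInv p := by
  apply stdNormInv_eq
  rw [stdNormCdf_neg, stdNormCdf_stdNormInv hp]

lemma stdNormInv_lt_of_lt {p q : ℝ} (hp : p ∈ Ioo (0:ℝ) 1) (hq : q ∈ Ioo (0:ℝ) 1)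
    (h : p < q) : stdNormInv p < stdNormInv q := by
  by_contra hc
  have := stdNormCdf_strictMono.monotone (not_lt.mp hc)
  rw [stdNormCdf_stdNormInv hp, stdNormCdf_stdNormInv hq] at this
  linarith

lemma gaussianReal_eq_map (μ σ : ℝ) (hσ : 0 < σ) :
    gaussianReal μ (⟨σ ^ 2, sq_nonneg σ⟩ : NNReal)
      = Measure.map (fun z => σ * z + μ) (gaussianReal 0 1) := by
  have h1 : Measure.map (fun z : ℝ => σ * z) (gaussianReal 0 1)
      = gaussianReal 0 (⟨σ ^ 2, sq_nonneg σ⟩ : NNReal) := by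
    rw [gaussianReal_map_const_mul σ]
    congr 1
    · ring
    · ext; simp <;> rfl
  have h2 : Measure.map (fun z : ℝ => z + μ) (gaussianReal 0 (⟨σ ^ 2, sq_nonneg σ⟩ : NNReal))
      = gaussianReal μ (⟨σ ^ 2, sq_nonneg σ⟩ : NNReal) := by
    exact (gaussianReal_map_add_const (μ := 0) (v := (⟨σ ^ 2, sq_nonneg σ⟩ : NNReal)) μ).trans
      (by rw [zero_add])
  rw [← h2, ← h1, Measure.map_map (measurable_id'.add_const μ) (measurable_const_mul σ)]
  rfl

lemma gaussianReal_Iic (μ σ : ℝ) (hσ : 0 < σ) (y : ℝ) :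
    ((gaussianReal μ (⟨σ ^ 2, sq_nonneg σ⟩ : NNReal)) (Iic y)).toReal
      = stdNormCdf ((y - μ) / σ) := by
  rw [gaussianReal_eq_map μ σ hσ,
    Measure.map_apply ((measurable_const_mul σ).add_const μ) measurableSet_Iic]
  have : (fun z => σ * z + μ) ⁻¹' Iic y = Iic ((y - μ) / σ) := by
    ext z
    simp only [mem_preimage, mem_Iic]
    rw [le_div_iff₀ hσ]
    constructor <;> intro h <;> nlinarith
  rw [this]
  rfl

lemma rvCdf_lognormal {P : Measure Ω} [IsProbabilityMeasure P] {X : Ω → ℝ} {μ σ : ℝ}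
    (hσ : 0 < σ) (h : IsLogNormalRV P X μ σ) (x : ℝ) :
    rvCdf P X x = if 0 < x then stdNormCdf ((Real.log x - μ) / σ) else 0 := by
  have hmap : rvCdf P X x = ((Measure.map X P) (Iic x)).toReal := by
    unfold rvCdf
    rw [Measure.map_apply h.1 measurableSet_Iic]
    rfl
  rw [hmap, h.2, Measure.map_apply Real.measurable_exp measurableSet_Iic]
  have hpre : Real.exp ⁻¹' Iic x = if 0 < x then Iic (Real.log x) else ∅ := by
    split_ifs with hx
    · ext z
      simp only [mem_preimage, mem_Iic]
      exact (Real.le_log_iff_exp_le hx).symm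
    · ext z
      simp only [mem_preimage, mem_Iic, mem_empty_iff_false, iff_false]
      push_neg at hx
      intro h'
      exact absurd (lt_of_lt_of_le (Real.exp_pos z) h') (not_lt.mpr hx)
  rw [hpre]
  split_ifs with hx
  · exact gaussianReal_Iic μ σ hσ (Real.log x)
  · simp


lemma leftInv_lognormal {P : Measure Ω} [IsProbabilityMeasure P] {X : Ω → ℝ} {μ σ : ℝ}
    (hσ : 0 < σ) (h : IsLogNormalRV P X μ σ) {u : ℝ} (hu : u ∈ Ioo (0:ℝ) 1) :
    leftInv (rvCdf P X) u = Real.exp (μ + σ * stdNormInv u) := by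
  set a := Real.exp (μ + σ * stdNormInv u) with ha
  have hset : {x | u ≤ rvCdf P X x} = Ici a := by
    ext x
    simp only [mem_setOf_eq, mem_Ici]
    rw [rvCdf_lognormal hσ h x]
    constructor
    · intro hx
      have hx0 : 0 < x := by
        by_contra h0
        rw [if_neg h0] at hx
        linarith [hu.1]
      rw [if_pos hx0] at hx
      have := stdNormCdf_stdNormInv hu
      have hz : stdNormInv u ≤ (Real.log x - μ) / σ := by
        by_contra hc
        have := stdNormCdf_strictMono (not_le.mp hc)
        rw [stdNormCdf_stdNormInv hu] at this
        linarith
      have hlog : μ + σ * stdNormInv u ≤ Real.log x := by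
        rw [le_div_iff₀ hσ] at hz
        nlinarith
      calc a ≤ Real.exp (Real.log x) := Real.exp_le_exp.mpr hlog
        _ = x := Real.exp_log hx0
    · intro hx
      have hx0 : 0 < x := lt_of_lt_of_le (Real.exp_pos _) hx
      rw [if_pos hx0]
      have hlog : μ + σ * stdNormInv u ≤ Real.log x := by
        rw [← Real.log_exp (μ + σ * stdNormInv u)]
        exact Real.log_le_log (Real.exp_pos _) hx
      have hz : stdNormInv u ≤ (Real.log x - μ) / σ := by
        rw [le_div_iff₀ hσ]; nlinarith
      calc u = stdNormCdf (stdNormInv u) := (stdNormCdf_stdNormInv hu).symm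
        _ ≤ stdNormCdf ((Real.log x - μ) / σ) := stdNormCdf_strictMono.monotone hz
  unfold leftInv
  rw [hset, csInf_Ici]
lemma psi_hasDerivAt (μ₁ μ₂ σ₁ σ₂ z : ℝ) :
    HasDerivAt (fun z => Real.exp (μ₁ + σ₁ * z) + Real.exp (μ₂ - σ₂ * z))
      (σ₁ * Real.exp (μ₁ + σ₁ * z) - σ₂ * Real.exp (μ₂ - σ₂ * z)) z := by
  have h1 : HasDerivAt (fun z => Real.exp (μ₁ + σ₁ * z)) (Real.exp (μ₁ + σ₁ * z) * σ₁) z := by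
    have hin : HasDerivAt (fun z : ℝ => μ₁ + σ₁ * z) σ₁ z := by
      simpa using (hasDerivAt_id z).const_mul σ₁ |>.const_add μ₁
    exact (Real.hasDerivAt_exp _).comp z hin
  have h2 : HasDerivAt (fun z => Real.exp (μ₂ - σ₂ * z)) (Real.exp (μ₂ - σ₂ * z) * (-σ₂)) z := by
    have hin : HasDerivAt (fun z : ℝ => μ₂ - σ₂ * z) (-σ₂) z := by
      simpa using ((hasDerivAt_id z).const_mul σ₂).const_sub μ₂
    exact (Real.hasDerivAt_exp _).comp z hin
  have := h1.add h2
  exact this.congr_deriv (by ring)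

lemma psi_deriv_pos (hσ₁ : 0 < σ₁) (hσ₂ : 0 < σ₂) {z z₀ : ℝ}
    (hz₀ : z₀ = (μ₂ - μ₁ + Real.log (σ₂ / σ₁)) / (σ₁ + σ₂)) (hz : z₀ < z) :
    0 < σ₁ * Real.exp (μ₁ + σ₁ * z) - σ₂ * Real.exp (μ₂ - σ₂ * z) := by
  have hs : 0 < σ₁ + σ₂ := by linarith
  have hlin : Real.log σ₂ + (μ₂ - σ₂ * z) < Real.log σ₁ + (μ₁ + σ₁ * z) := by
    have : (σ₁ + σ₂) * z₀ = μ₂ - μ₁ + (Real.log σ₂ - Real.log σ₁) := by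
      rw [hz₀, Real.log_div (ne_of_gt hσ₂) (ne_of_gt hσ₁)]
      field_simp
    nlinarith [mul_lt_mul_of_pos_left hz hs]
  have h2 : σ₂ * Real.exp (μ₂ - σ₂ * z) < σ₁ * Real.exp (μ₁ + σ₁ * z) := by
    have e1 : σ₂ * Real.exp (μ₂ - σ₂ * z) = Real.exp (Real.log σ₂ + (μ₂ - σ₂ * z)) := by
      simp [Real.exp_add, Real.exp_log hσ₂, Real.exp_sub]
    have e2 : σ₁ * Real.exp (μ₁ + σ₁ * z) = Real.exp (Real.log σ₁ + (μ₁ + σ₁ * z)) := by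
      simp [Real.exp_add, Real.exp_log hσ₁]
    rw [e1, e2]
    exact Real.exp_lt_exp.mpr hlin
  linarith

lemma psi_deriv_neg (hσ₁ : 0 < σ₁) (hσ₂ : 0 < σ₂) {z z₀ : ℝ}
    (hz₀ : z₀ = (μ₂ - μ₁ + Real.log (σ₂ / σ₁)) / (σ₁ + σ₂)) (hz : z < z₀) :
    σ₁ * Real.exp (μ₁ + σ₁ * z) - σ₂ * Real.exp (μ₂ - σ₂ * z) < 0 := by
  have hs : 0 < σ₁ + σ₂ := by linarith
  have hlin : Real.log σ₁ + (μ₁ + σ₁ * z) < Real.log σ₂ + (μ₂ - σ₂ * z) := by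
    have : (σ₁ + σ₂) * z₀ = μ₂ - μ₁ + (Real.log σ₂ - Real.log σ₁) := by
      rw [hz₀, Real.log_div (ne_of_gt hσ₂) (ne_of_gt hσ₁)]
      field_simp
    nlinarith [mul_lt_mul_of_pos_left hz hs]
  have h2 : σ₁ * Real.exp (μ₁ + σ₁ * z) < σ₂ * Real.exp (μ₂ - σ₂ * z) := by
    have e1 : σ₂ * Real.exp (μ₂ - σ₂ * z) = Real.exp (Real.log σ₂ + (μ₂ - σ₂ * z)) := by
      simp [Real.exp_add, Real.exp_log hσ₂, Real.exp_sub]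
    have e2 : σ₁ * Real.exp (μ₁ + σ₁ * z) = Real.exp (Real.log σ₁ + (μ₁ + σ₁ * z)) := by
      simp [Real.exp_add, Real.exp_log hσ₁]
    rw [e1, e2]
    exact Real.exp_lt_exp.mpr hlin
  linarith

lemma psi_strictMonoOn (hσ₁ : 0 < σ₁) (hσ₂ : 0 < σ₂) {z₀ : ℝ}
    (hz₀ : z₀ = (μ₂ - μ₁ + Real.log (σ₂ / σ₁)) / (σ₁ + σ₂)) :
    StrictMonoOn (fun z => Real.exp (μ₁ + σ₁ * z) + Real.exp (μ₂ - σ₂ * z)) (Ici z₀) := by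
  apply strictMonoOn_of_hasDerivWithinAt_pos (convex_Ici z₀)
    (fun z _ => (psi_hasDerivAt μ₁ μ₂ σ₁ σ₂ z).continuousAt.continuousWithinAt)
    (fun z hz => ((psi_hasDerivAt μ₁ μ₂ σ₁ σ₂ z).hasDerivWithinAt))
    (fun z hz => psi_deriv_pos hσ₁ hσ₂ hz₀ (by simpa [interior_Ici] using hz))

lemma psi_strictAntiOn (hσ₁ : 0 < σ₁) (hσ₂ : 0 < σ₂) {z₀ : ℝ}
    (hz₀ : z₀ = (μ₂ - μ₁ + Real.log (σ₂ / σ₁)) / (σ₁ + σ₂)) :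
    StrictAntiOn (fun z => Real.exp (μ₁ + σ₁ * z) + Real.exp (μ₂ - σ₂ * z)) (Iic z₀) := by
  apply strictAntiOn_of_hasDerivWithinAt_neg (convex_Iic z₀)
    (fun z _ => (psi_hasDerivAt μ₁ μ₂ σ₁ σ₂ z).continuousAt.continuousWithinAt)
    (fun z hz => ((psi_hasDerivAt μ₁ μ₂ σ₁ σ₂ z).hasDerivWithinAt))
    (fun z hz => psi_deriv_neg hσ₁ hσ₂ hz₀ (by simpa [interior_Iic] using hz))

end AuxLognormalShape

/-- the aggregate loss function of two non-identically distributed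
log-normal risks is U-shaped with minimum at `Φ((μ₂ - μ₁ + ln(σ₂/σ₁))/(σ₁ + σ₂))`. -/
theorem lognormal_nonid_aggregate_loss_shape
    (P : Measure Ω) [IsProbabilityMeasure P]
    (X₁ X₂ : Ω → ℝ) (μ₁ μ₂ σ₁ σ₂ : ℝ) (hσ₁ : 0 < σ₁) (hσ₂ : 0 < σ₂)
    (h₁ : IsLogNormalRV P X₁ μ₁ σ₁) (h₂ : IsLogNormalRV P X₂ μ₂ σ₂)
    (hne : (μ₁, σ₁) ≠ (μ₂, σ₂))
    (φ : ℝ → ℝ)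
    (hφ : ∀ u, φ u = leftInv (rvCdf P X₁) u + leftInv (rvCdf P X₂) (1 - u))
    (u₀ : ℝ) (hu₀ : u₀ = stdNormCdf ((μ₂ - μ₁ + Real.log (σ₂ / σ₁)) / (σ₁ + σ₂))) :
    u₀ ∈ Ioo (0:ℝ) 1 ∧
    StrictAntiOn φ (Ioo 0 u₀) ∧
    StrictMonoOn φ (Ioo u₀ 1) ∧
    (∀ u ∈ Ioo (0:ℝ) 1, φ u₀ ≤ φ u) := by
  set z₀ : ℝ := (μ₂ - μ₁ + Real.log (σ₂ / σ₁)) / (σ₁ + σ₂) with hz₀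
  set ψ : ℝ → ℝ := fun z => Real.exp (μ₁ + σ₁ * z) + Real.exp (μ₂ - σ₂ * z) with hψ
  have hu01 : u₀ ∈ Ioo (0:ℝ) 1 := hu₀ ▸ stdNormCdf_mem_Ioo z₀
  have hinvu₀ : stdNormInv u₀ = z₀ := by rw [hu₀]; exact stdNormInv_stdNormCdf z₀
  have hφψ : ∀ u ∈ Ioo (0:ℝ) 1, φ u = ψ (stdNormInv u) := by
    intro u hu
    have hu' : 1 - u ∈ Ioo (0:ℝ) 1 := ⟨by linarith [hu.2], by linarith [hu.1]⟩
    rw [hφ, leftInv_lognormal hσ₁ h₁ hu, leftInv_lognormal hσ₂ h₂ hu',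
      stdNormInv_one_sub hu]
    simp only [hψ]
    ring_nf
  have hanti : StrictAntiOn ψ (Iic z₀) := psi_strictAntiOn hσ₁ hσ₂ hz₀
  have hmono : StrictMonoOn ψ (Ici z₀) := psi_strictMonoOn hσ₁ hσ₂ hz₀
  refine ⟨hu01, ?_, ?_, ?_⟩
  · intro u hu v hv huv
    have hu1 : u ∈ Ioo (0:ℝ) 1 := ⟨hu.1, hu.2.trans hu01.2⟩
    have hv1 : v ∈ Ioo (0:ℝ) 1 := ⟨hv.1, hv.2.trans hu01.2⟩
    rw [hφψ u hu1, hφψ v hv1]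
    have h1 : stdNormInv u < stdNormInv v := stdNormInv_lt_of_lt hu1 hv1 huv
    have h2 : stdNormInv v < z₀ := by
      rw [← hinvu₀]; exact stdNormInv_lt_of_lt hv1 hu01 hv.2
    exact hanti (le_of_lt (h1.trans h2)) (le_of_lt h2) h1
  · intro u hu v hv huv
    have hu1 : u ∈ Ioo (0:ℝ) 1 := ⟨hu01.1.trans hu.1, hu.2⟩
    have hv1 : v ∈ Ioo (0:ℝ) 1 := ⟨hu01.1.trans hv.1, hv.2⟩
    rw [hφψ u hu1, hφψ v hv1]
    have h1 : stdNormInv u < stdNormInv v := stdNormInv_lt_of_lt hu1 hv1 huv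
    have h2 : z₀ < stdNormInv u := by
      rw [← hinvu₀]; exact stdNormInv_lt_of_lt hu01 hu1 hu.1
    exact hmono (le_of_lt h2) (le_of_lt (h2.trans h1)) h1
  · intro u hu
    rw [hφψ u hu, hφψ u₀ hu01, hinvu₀]
    rcases le_total u u₀ with h | h
    · have : stdNormInv u ≤ z₀ := by
        rcases eq_or_lt_of_le h with rfl | h'
        · exact le_of_eq hinvu₀
        · rw [← hinvu₀]; exact le_of_lt (stdNormInv_lt_of_lt hu hu01 h')
      exact hanti.antitoneOn this (Set.mem_Iic.mpr le_rfl) this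
    · have : z₀ ≤ stdNormInv u := by
        rcases eq_or_lt_of_le h with h' | h'
        · rw [← hinvu₀, h']
        · rw [← hinvu₀]; exact le_of_lt (stdNormInv_lt_of_lt hu01 hu h')
      exact hmono.monotoneOn (Set.mem_Ici.mpr le_rfl) this this

end
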